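/- Let ℏ > 0, p ∈ ℤ and q a positive integer. For j = 0, …, q−1 define the Gauss-sum coefficients c_j = (1/q) Σ_{k=0}^{q−1} e^{2πi p k²/q} e^{−2πi j k/q}. Then for every x ∈ ℝ, Σ_{n∈ℤ} e^{2πi p n²/q} e^{−n² ℏ/2} e^{i n x} = Σ_{j=0}^{q−1} c_j · ( Σ_{n∈ℤ} e^{−n² ℏ/2} e^{i n (x + 2π j/q)} ). In other words, the state evolved under the free flow on the circle up to the fractional-revival time t_{p/q} = (p/q)(2π/ℏ) is a superposition of q translates of the initial periodized coherent state ψ₀ located at the q equally spaced points 2πj/q: a quantum ubiquity phenomenon with no classical counterpart. -/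

import Mathlib

open Complex

private lemma gaussSummable (ℏ : ℝ) (hℏ : 0 < ℏ) :
    Summable fun n : ℤ => Real.exp (-(n : ℝ) ^ 2 * ℏ / 2) := by
  have key : Summable fun n : ℕ => Real.exp (-(n : ℝ) ^ 2 * ℏ / 2) := by
    have hgeo : Summable fun n : ℕ => Real.exp (-(ℏ / 2)) ^ n :=
      summable_geometric_of_lt_one (Real.exp_nonneg _)
        (Real.exp_lt_one_iff.mpr (by linarith))
    apply hgeo.of_nonneg_of_le (fun n => (Real.exp_pos _).le)
    intro n
    rw [← Real.exp_nat_mul]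
    apply Real.exp_le_exp.mpr
    have : (n : ℝ) ≤ (n : ℝ) ^ 2 := by
      rcases Nat.eq_zero_or_pos n with h | h
      · simp [h]
      · have h1 : (1 : ℝ) ≤ (n : ℝ) := by exact_mod_cast h
        nlinarith
    nlinarith
  apply Summable.of_nat_of_neg <;> simpa using key

private lemma geomRoots (q : ℕ) (hq : 0 < q) (m : ℤ) :
    ∑ j ∈ Finset.range q, Complex.exp (2 * Real.pi * I * (m : ℂ) / (q : ℂ)) ^ j
      = if (q : ℤ) ∣ m then (q : ℂ) else 0 := by
  have hq0 : (q : ℂ) ≠ 0 := Nat.cast_ne_zero.mpr hq.ne'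
  have hpi : (2 * Real.pi * I : ℂ) ≠ 0 := by
    simp [Real.pi_ne_zero, I_ne_zero, Complex.ext_iff, Real.pi_ne_zero]
  set ζ : ℂ := Complex.exp (2 * Real.pi * I * (m : ℂ) / (q : ℂ)) with hζ
  by_cases hdvd : (q : ℤ) ∣ m
  · obtain ⟨d, hd⟩ := hdvd
    have hz1 : ζ = 1 := by
      rw [hζ, hd]
      push_cast
      rw [show 2 * (Real.pi : ℂ) * I * ((q : ℂ) * (d : ℂ)) / (q : ℂ)
          = (d : ℂ) * (2 * Real.pi * I) by field_simp]
      exact Complex.exp_int_mul_two_pi_mul_I d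
    simp [hz1, hd, Dvd.intro d rfl]
  · have hne : ζ ≠ 1 := by
      intro h
      obtain ⟨k, hk⟩ := Complex.exp_eq_one_iff.mp (hζ ▸ h)
      apply hdvd
      have hk' : (2 * Real.pi * I : ℂ) * (m : ℂ) = (2 * Real.pi * I : ℂ) * ((k * q : ℤ) : ℂ) := by
        field_simp at hk
        push_cast
        linear_combination (2 * Real.pi * I) * hk
      have : (m : ℂ) = ((k * q : ℤ) : ℂ) := mul_left_cancel₀ hpi hk'
      have : m = k * q := by exact_mod_cast this
      exact ⟨k, by linarith⟩
    have hzq : ζ ^ q = 1 := by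
      rw [hζ, ← Complex.exp_nat_mul,
        show (q : ℂ) * (2 * Real.pi * I * (m : ℂ) / (q : ℂ)) = (m : ℂ) * (2 * Real.pi * I) by
          field_simp]
      exact Complex.exp_int_mul_two_pi_mul_I m
    rw [geom_sum_eq hne, hzq, if_neg hdvd]
    simp

private lemma expPeriodic (q : ℕ) (hq : 0 < q) (a b : ℤ) (h : (q : ℤ) ∣ a - b) :
    Complex.exp (2 * Real.pi * I * (a : ℂ) / (q : ℂ))
      = Complex.exp (2 * Real.pi * I * (b : ℂ) / (q : ℂ)) := by
  have hq0 : (q : ℂ) ≠ 0 := Nat.cast_ne_zero.mpr hq.ne'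
  obtain ⟨d, hd⟩ := h
  have ha : a = b + q * d := by linarith
  have hcast : (a : ℂ) = (b : ℂ) + (q : ℂ) * (d : ℂ) := by exact_mod_cast congrArg (Int.cast : ℤ → ℂ) ha
  rw [hcast, show 2 * (Real.pi : ℂ) * I * ((b : ℂ) + (q : ℂ) * (d : ℂ)) / (q : ℂ)
      = 2 * Real.pi * I * (b : ℂ) / (q : ℂ) + (d : ℂ) * (2 * Real.pi * I) by field_simp,
    Complex.exp_add, Complex.exp_int_mul_two_pi_mul_I, mul_one]

private lemma dftInv (p : ℤ) (q : ℕ) (hq : 0 < q) (c : ℕ → ℂ)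
    (hc : ∀ j : ℕ, c j = (1 / (q : ℂ)) *
      ∑ k ∈ Finset.range q,
        Complex.exp (2 * Real.pi * I * (p : ℂ) * (k : ℂ) ^ 2 / (q : ℂ)) *
          Complex.exp (-(2 * Real.pi * I * (j : ℂ) * (k : ℂ) / (q : ℂ)))) (n : ℤ) :
    ∑ j ∈ Finset.range q, c j * Complex.exp (2 * Real.pi * I * (n : ℂ) * (j : ℂ) / (q : ℂ))
      = Complex.exp (2 * Real.pi * I * (p : ℂ) * (n : ℂ) ^ 2 / (q : ℂ)) := by
  have hq0 : (q : ℂ) ≠ 0 := Nat.cast_ne_zero.mpr hq.ne'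
  have step : ∀ j ∈ Finset.range q,
      c j * Complex.exp (2 * Real.pi * I * (n : ℂ) * (j : ℂ) / (q : ℂ))
        = ∑ k ∈ Finset.range q, (1 / (q : ℂ)) *
            (Complex.exp (2 * Real.pi * I * (p : ℂ) * (k : ℂ) ^ 2 / (q : ℂ)) *
              Complex.exp (2 * Real.pi * I * ((n - (k : ℤ) : ℤ) : ℂ) / (q : ℂ)) ^ j) := by
    intro j _
    rw [hc j]
    rw [Finset.mul_sum, Finset.sum_mul]
    refine Finset.sum_congr rfl fun k _ => ?_
    have hB : Complex.exp (-(2 * Real.pi * I * (j : ℂ) * (k : ℂ) / (q : ℂ))) *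
        Complex.exp (2 * Real.pi * I * (n : ℂ) * (j : ℂ) / (q : ℂ))
          = Complex.exp (2 * Real.pi * I * ((n - (k : ℤ) : ℤ) : ℂ) / (q : ℂ)) ^ j := by
      rw [← Complex.exp_nat_mul, ← Complex.exp_add]
      congr 1
      push_cast
      field_simp
      ring
    calc (1 / (q : ℂ) * (Complex.exp (2 * Real.pi * I * (p : ℂ) * (k : ℂ) ^ 2 / (q : ℂ)) *
            Complex.exp (-(2 * Real.pi * I * (j : ℂ) * (k : ℂ) / (q : ℂ))))) *
          Complex.exp (2 * Real.pi * I * (n : ℂ) * (j : ℂ) / (q : ℂ))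
        = 1 / (q : ℂ) * (Complex.exp (2 * Real.pi * I * (p : ℂ) * (k : ℂ) ^ 2 / (q : ℂ)) *
            (Complex.exp (-(2 * Real.pi * I * (j : ℂ) * (k : ℂ) / (q : ℂ))) *
              Complex.exp (2 * Real.pi * I * (n : ℂ) * (j : ℂ) / (q : ℂ)))) := by ring
      _ = _ := by rw [hB]
  rw [Finset.sum_congr rfl step, Finset.sum_comm]
  have inner : ∀ k ∈ Finset.range q,
      ∑ j ∈ Finset.range q, (1 / (q : ℂ)) *
          (Complex.exp (2 * Real.pi * I * (p : ℂ) * (k : ℂ) ^ 2 / (q : ℂ)) *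
            Complex.exp (2 * Real.pi * I * ((n - (k : ℤ) : ℤ) : ℂ) / (q : ℂ)) ^ j)
        = (1 / (q : ℂ)) * (Complex.exp (2 * Real.pi * I * (p : ℂ) * (k : ℂ) ^ 2 / (q : ℂ)) *
            (if (q : ℤ) ∣ n - (k : ℤ) then (q : ℂ) else 0)) := by
    intro k _
    rw [← Finset.mul_sum, ← Finset.mul_sum, geomRoots q hq]
  rw [Finset.sum_congr rfl inner]
  set k₀ : ℕ := (n % (q : ℤ)).toNat with hk₀def
  have hk₀cast : (k₀ : ℤ) = n % (q : ℤ) :=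
    Int.toNat_of_nonneg (Int.emod_nonneg n (by exact_mod_cast hq.ne'))
  have hk₀mem : k₀ ∈ Finset.range q := by
    rw [Finset.mem_range]
    have := Int.emod_lt_of_pos n (by exact_mod_cast hq : (0:ℤ) < q)
    omega
  have hdvd₀ : (q : ℤ) ∣ n - (k₀ : ℤ) := ⟨n / q, by rw [hk₀cast]; linarith [Int.mul_ediv_add_emod n q]⟩
  rw [Finset.sum_eq_single k₀]
  · rw [if_pos hdvd₀]
    have h3 : (q : ℤ) ∣ p * (k₀ : ℤ) ^ 2 - p * n ^ 2 := by
      have e : p * (k₀ : ℤ) ^ 2 - p * n ^ 2 = (n - (k₀ : ℤ)) * (-(p * (n + k₀))) := by ring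
      rw [e]; exact hdvd₀.mul_right _
    have h1 := expPeriodic q hq (p * (k₀ : ℤ) ^ 2) (p * n ^ 2) h3
    push_cast at h1
    have hA : Complex.exp (2 * Real.pi * I * (p : ℂ) * (k₀ : ℂ) ^ 2 / (q : ℂ))
        = Complex.exp (2 * Real.pi * I * (p : ℂ) * (n : ℂ) ^ 2 / (q : ℂ)) := by
      convert h1 using 2 <;> ring
    rw [hA]
    field_simp
  · intro k hk hne
    rw [if_neg, mul_zero, mul_zero]
    intro hdvd
    apply hne
    have h2 : (q : ℤ) ∣ (k : ℤ) - (k₀ : ℤ) := by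
      have h := dvd_sub hdvd₀ hdvd
      have e : n - (k₀ : ℤ) - (n - (k : ℤ)) = (k : ℤ) - k₀ := by ring
      rwa [e] at h
    have hklt := Finset.mem_range.mp hk
    have hk₀lt := Finset.mem_range.mp hk₀mem
    have habs : |(k : ℤ) - (k₀ : ℤ)| < (q : ℤ) := by
      rw [abs_lt]; omega
    have h0 : (k : ℤ) - (k₀ : ℤ) = 0 := Int.eq_zero_of_abs_lt_dvd h2 habs
    omega
  · intro h; exact absurd hk₀mem h

/-- Fractional revival / quantum ubiquity on the circle: at time `t_{p/q} = (p/q)(2π/ℏ)`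
the free evolution of the periodized Gaussian coherent state is a superposition of `q`
translates at the equally spaced points `2πj/q`, with Gauss-sum coefficients
`c_j = (1/q) Σ_{k<q} e^{2πi p k²/q} e^{−2πi j k/q}`. -/
theorem fractional_revival_gauss_sums
    (ℏ : ℝ) (hℏ : 0 < ℏ) (p : ℤ) (q : ℕ) (hq : 0 < q) (c : ℕ → ℂ)
    (hc : ∀ j : ℕ, c j = (1 / (q : ℂ)) *
      ∑ k ∈ Finset.range q,
        Complex.exp (2 * Real.pi * I * (p : ℂ) * (k : ℂ) ^ 2 / (q : ℂ)) *
          Complex.exp (-(2 * Real.pi * I * (j : ℂ) * (k : ℂ) / (q : ℂ)))) :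
    ∀ x : ℝ,
      (∑' n : ℤ, Complex.exp (2 * Real.pi * I * (p : ℂ) * (n : ℂ) ^ 2 / (q : ℂ)) *
          (Real.exp (-(n : ℝ) ^ 2 * ℏ / 2) : ℂ) * Complex.exp (I * (n : ℂ) * x)) =
        ∑ j ∈ Finset.range q, c j *
          ∑' n : ℤ, (Real.exp (-(n : ℝ) ^ 2 * ℏ / 2) : ℂ) *
            Complex.exp (I * (n : ℂ) * ((x : ℂ) + 2 * Real.pi * (j : ℂ) / (q : ℂ))) := by
  intro x
  have hq0 : (q : ℂ) ≠ 0 := Nat.cast_ne_zero.mpr hq.ne'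
  have hsum := gaussSummable ℏ hℏ
  have hnorm : ∀ (r : ℝ) (n : ℤ),
      ‖(Real.exp (-(n : ℝ) ^ 2 * ℏ / 2) : ℂ) * Complex.exp (I * (n : ℂ) * (r : ℂ))‖
        = Real.exp (-(n : ℝ) ^ 2 * ℏ / 2) := by
    intro r n
    have h1 : I * (n : ℂ) * (r : ℂ) = (((n : ℝ) * r : ℝ) : ℂ) * I := by push_cast; ring
    rw [norm_mul, h1, Complex.norm_real, Real.norm_of_nonneg (Real.exp_pos _).le,
      Complex.norm_exp_ofReal_mul_I, mul_one]
  have hsummC : ∀ r : ℝ, Summable fun n : ℤ =>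
      (Real.exp (-(n : ℝ) ^ 2 * ℏ / 2) : ℂ) * Complex.exp (I * (n : ℂ) * (r : ℂ)) := by
    intro r
    apply Summable.of_norm
    simpa only [hnorm r] using hsum
  have hz : ∀ j : ℕ, (x : ℂ) + 2 * (Real.pi : ℂ) * (j : ℂ) / (q : ℂ)
      = ((x + 2 * Real.pi * (j : ℝ) / (q : ℝ) : ℝ) : ℂ) := by
    intro j; push_cast; ring
  simp only [hz]
  have hterm : ∀ j ∈ Finset.range q,
      c j * ∑' n : ℤ, (Real.exp (-(n : ℝ) ^ 2 * ℏ / 2) : ℂ) *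
          Complex.exp (I * (n : ℂ) * ((x + 2 * Real.pi * (j : ℝ) / (q : ℝ) : ℝ) : ℂ))
        = ∑' n : ℤ, c j * ((Real.exp (-(n : ℝ) ^ 2 * ℏ / 2) : ℂ) *
            Complex.exp (I * (n : ℂ) * ((x + 2 * Real.pi * (j : ℝ) / (q : ℝ) : ℝ) : ℂ))) := by
    intro j _; rw [tsum_mul_left]
  rw [Finset.sum_congr rfl hterm,
    ← Summable.tsum_finsetSum (fun (j : ℕ) (_ : j ∈ Finset.range q) =>
      (hsummC (x + 2 * Real.pi * (j : ℝ) / (q : ℝ))).mul_left (c j))]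
  refine tsum_congr fun n => ?_
  have hsplit : ∀ j : ℕ,
      Complex.exp (I * (n : ℂ) * ((x + 2 * Real.pi * (j : ℝ) / (q : ℝ) : ℝ) : ℂ))
        = Complex.exp (I * (n : ℂ) * (x : ℂ)) *
            Complex.exp (2 * Real.pi * I * (n : ℂ) * (j : ℂ) / (q : ℂ)) := by
    intro j
    rw [← Complex.exp_add]
    congr 1
    push_cast
    field_simp
  have hstep : ∀ j ∈ Finset.range q,
      c j * ((Real.exp (-(n : ℝ) ^ 2 * ℏ / 2) : ℂ) *
          Complex.exp (I * (n : ℂ) * ((x + 2 * Real.pi * (j : ℝ) / (q : ℝ) : ℝ) : ℂ)))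
        = (c j * Complex.exp (2 * Real.pi * I * (n : ℂ) * (j : ℂ) / (q : ℂ))) *
            ((Real.exp (-(n : ℝ) ^ 2 * ℏ / 2) : ℂ) * Complex.exp (I * (n : ℂ) * (x : ℂ))) := by
    intro j _
    rw [hsplit j]
    ring
  rw [Finset.sum_congr rfl hstep, ← Finset.sum_mul, dftInv p q hq c hc n]
  ring
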